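/- Fix p_1,…,p_{m−1} ∈ [0,1], let q ≤ 1, and let p_m be drawn from a density f0 on [0,1] satisfying f0(t) ≤ 1 for all t ∈ [0,q]. Running the SL procedure at level q on p_1,…,p_m, we have P{p_(R_q) = p_m} ≤ q/m. -/

import Mathlib

open MeasureTheory ProbabilityTheory Filter

noncomputable section

/-- The uniform distribution on `[0,1]` (the null `p`-value distribution). -/
def uniform01 : Measure ℝ := volume.restrict (Set.Icc 0 1)

/-- `orderStat m p k` is the `k`-th order statistic `p_(k)` of `p_1, …, p_m` (1-indexed),
with the conventions `p_(0) = 0` and `p_(k) = 0` for `k > m`. -/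
def orderStat (m : ℕ) (p : Fin m → ℝ) (k : ℕ) : ℝ :=
  if h : 1 ≤ k ∧ k ≤ m then p (Tuple.sort p ⟨k - 1, by omega⟩) else 0

/-- The SL rejection count at level `q`: the largest minimizer over `k ∈ {0, …, m}`
of `p_(k) - q k / m`. -/
def slCount (m : ℕ) (q : ℝ) (p : Fin m → ℝ) : ℕ :=
  sSup {k | k ≤ m ∧ ∀ j ≤ m,
    orderStat m p k - q * k / m ≤ orderStat m p j - q * j / m}

/-- The SL rejection threshold `τ_q = p_(R_q)`. -/
def slThreshold (m : ℕ) (q : ℝ) (p : Fin m → ℝ) : ℝ :=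
  orderStat m p (slCount m q p)

/-- The empirical cdf `F_m` of `p_1, …, p_m`. -/
def ecdf (m : ℕ) (p : Fin m → ℝ) (t : ℝ) : ℝ :=
  ((Finset.univ.filter fun i => p i ≤ t).card : ℝ) / m

/-- The alternative `p`-value distribution, with density `f1` on `[0,1]`. -/
def altMeasure (f1 : ℝ → ℝ) : Measure ℝ :=
  uniform01.withDensity fun t => ENNReal.ofReal (f1 t)

/-- The two-groups distribution of a pair `(H_i, p_i)`: `H_i ~ Bernoulli(1 - π0)`
(`false` meaning the null holds), `p_i | H_i = false ~ Unif[0,1]`, and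
`p_i | H_i = true` has density `f1`. -/
def pairMeasure (π0 : ℝ) (f1 : ℝ → ℝ) : Measure (Bool × ℝ) :=
  ENNReal.ofReal π0 • (Measure.dirac false).prod uniform01
    + ENNReal.ofReal (1 - π0) • (Measure.dirac true).prod (altMeasure f1)

/-- The joint distribution of the i.i.d. pairs `(H_i, p_i)`, `i = 1, …, m`. -/
def jointMeasure (m : ℕ) (π0 : ℝ) (f1 : ℝ → ℝ) : Measure (Fin m → Bool × ℝ) :=
  Measure.pi fun _ => pairMeasure π0 f1

/-- The `p`-values of an outcome of the two-groups model. -/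
def pvals (m : ℕ) (x : Fin m → Bool × ℝ) (i : Fin m) : ℝ := (x i).2

/-- The marginal `p`-value mixture density `f = π0 + (1 - π0) f1`. -/
def mixDensity (π0 : ℝ) (f1 : ℝ → ℝ) (t : ℝ) : ℝ := π0 + (1 - π0) * f1 t

/-- The local false discovery rate `lfdr(t) = π0 / f(t)`. -/
def lfdr (π0 : ℝ) (f1 : ℝ → ℝ) (t : ℝ) : ℝ := π0 / mixDensity π0 f1 t

/-- The event that, rejecting the `R` hypotheses with the smallest `p`-values,
the last rejection is a false discovery: `R > 0` and `H_(R) = 0`, where `H_(R)` is the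
hypothesis indicator paired with the `R`-th smallest `p`-value. -/
def lastRejNull (m : ℕ) (R : ℕ) (x : Fin m → Bool × ℝ) : Prop :=
  ∃ h : 1 ≤ R ∧ R ≤ m,
    (x (Tuple.sort (pvals m x) ⟨R - 1, by omega⟩)).1 = false

/-- The maximum of `g` over a finite set `S`, with the convention that the
maximum over the empty set is `0`. -/
def maxOver {ι : Type*} (S : Finset ι) (g : ι → ℝ) : ℝ :=
  if h : S.Nonempty then S.sup' h g else 0

/-- The SL rejection set `𝓡_q = {i : p_i ≤ τ_q}`. -/
def rejSet (m : ℕ) (q : ℝ) (p : Fin m → ℝ) : Finset (Fin m) :=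
  Finset.univ.filter fun i => p i ≤ slThreshold m q p

/-! ### Auxiliary lemmas for `stmt3` -/

lemma orderStat_zero (m : ℕ) (x : Fin m → ℝ) : orderStat m x 0 = 0 := by
  rw [orderStat, dif_neg]; omega

lemma orderStat_le_iff {m : ℕ} (x : Fin m → ℝ) {k : ℕ} (hk1 : 1 ≤ k) (hk2 : k ≤ m) (c : ℝ) :
    orderStat m x k ≤ c ↔ k ≤ Fintype.card {i // x i ≤ c} := by
  classical
  have h := Tuple.lt_card_le_iff_apply_le_of_monotone (f := x ∘ Tuple.sort x) (a := c)
      (j := ⟨k - 1, by omega⟩) (Tuple.monotone_sort x)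
  rw [← Fintype.card_subtype] at h
  have hcard : Fintype.card {i // (x ∘ Tuple.sort x) i ≤ c} = Fintype.card {i // x i ≤ c} :=
    Fintype.card_congr ((Tuple.sort x).subtypeEquiv fun i => Iff.rfl)
  rw [hcard] at h
  rw [orderStat, dif_pos ⟨hk1, hk2⟩]
  constructor
  · intro hle
    have h2 := h.mpr hle
    have h3 : k - 1 < Fintype.card {i // x i ≤ c} := h2
    omega
  · intro hle
    exact h.mp (show k - 1 < Fintype.card {i // x i ≤ c} by omega)

lemma card_snoc_le {n : ℕ} (p : Fin n → ℝ) (u c : ℝ) :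
    Fintype.card {i // (Fin.snoc p u : Fin (n+1) → ℝ) i ≤ c}
      = Fintype.card {i // p i ≤ c} + (if u ≤ c then 1 else 0) := by
  classical
  simp only [Fintype.card_subtype]
  rw [Finset.card_filter, Finset.card_filter, Fin.sum_univ_castSucc]
  simp

lemma orderStat_nonneg {n : ℕ} {p : Fin n → ℝ} (hp : ∀ i, 0 ≤ p i) (k : ℕ) :
    0 ≤ orderStat n p k := by
  rw [orderStat]; split
  · exact hp _
  · exact le_refl 0

lemma orderStat_mono {n : ℕ} {p : Fin n → ℝ} (hp : ∀ i, 0 ≤ p i) {i j : ℕ}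
    (hij : i ≤ j) (hj : j ≤ n) : orderStat n p i ≤ orderStat n p j := by
  rcases Nat.eq_zero_or_pos i with h0 | h1
  · rw [h0, orderStat_zero]; exact orderStat_nonneg hp j
  · have hj1 : 1 ≤ j := le_trans h1 hij
    have hcard := (orderStat_le_iff p hj1 hj (orderStat n p j)).mp le_rfl
    exact (orderStat_le_iff p h1 (hij.trans hj) _).mpr (hij.trans hcard)

lemma slCount_spec (m : ℕ) (q : ℝ) (x : Fin m → ℝ) :
    slCount m q x ≤ m ∧ ∀ j ≤ m,
      orderStat m x (slCount m q x) - q * (slCount m q x) / m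
        ≤ orderStat m x j - q * j / m := by
  classical
  set S : Set ℕ := {k | k ≤ m ∧ ∀ j ≤ m,
    orderStat m x k - q * k / m ≤ orderStat m x j - q * j / m} with hS
  have hne : S.Nonempty := by
    obtain ⟨a, ha, hmin⟩ := Finset.exists_min_image (Finset.range (m+1))
      (fun j => orderStat m x j - q * j / m) ⟨0, by simp⟩
    have ham := Finset.mem_range.mp ha
    exact ⟨a, by omega, fun j hj => hmin j (Finset.mem_range.mpr (by omega))⟩
  have hbdd : BddAbove S := ⟨m, fun k hk => hk.1⟩
  have : slCount m q x ∈ S := Nat.sSup_mem hne hbdd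
  exact this

/-- The key combinatorial summation lemma: intervals `[a k, b k]` chained by
`b j ≤ a k` for `j < k` and `b k ≤ c + a j` for `j ≤ k` have total positive
length at most `c`. -/
lemma sum_interval_bound (m : ℕ) (a b : ℕ → ℝ) (c : ℝ) (hc : 0 ≤ c)
    (h1 : ∀ j k, 1 ≤ j → j < k → k ≤ m → b j ≤ a k)
    (h2 : ∀ j k, 1 ≤ j → j ≤ k → k ≤ m → b k ≤ c + a j) :
    ∑ k ∈ Finset.Icc 1 m, max 0 (b k - a k) ≤ c := by
  have key : ∀ K, K ≤ m →
      (∑ k ∈ Finset.Icc 1 K, max 0 (b k - a k) ≤ 0) ∨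
      (∃ i j, 1 ≤ i ∧ i ≤ j ∧ j ≤ K ∧
        ∑ k ∈ Finset.Icc 1 K, max 0 (b k - a k) ≤ b j - a i) := by
    intro K
    induction K with
    | zero => intro _; left; simp
    | succ K ih =>
      intro hK
      have hK' : K ≤ m := by omega
      have hsum : ∑ k ∈ Finset.Icc 1 (K+1), max 0 (b k - a k)
          = (∑ k ∈ Finset.Icc 1 K, max 0 (b k - a k)) + max 0 (b (K+1) - a (K+1)) :=
        Finset.sum_Icc_succ_top (by omega) _
      rcases le_or_gt (b (K+1)) (a (K+1)) with hba | hba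
      · have hmax : max 0 (b (K+1) - a (K+1)) = 0 := max_eq_left (by linarith)
        rcases ih hK' with h | ⟨i, j, hi, hij, hjK, hle⟩
        · left; rw [hsum, hmax]; linarith
        · right; exact ⟨i, j, hi, hij, by omega, by rw [hsum, hmax]; linarith⟩
      · have hmax : max 0 (b (K+1) - a (K+1)) = b (K+1) - a (K+1) :=
          max_eq_right (by linarith)
        rcases ih hK' with h | ⟨i, j, hi, hij, hjK, hle⟩
        · right; exact ⟨K+1, K+1, by omega, le_rfl, le_rfl, by rw [hsum, hmax]; linarith⟩
        · right
          refine ⟨i, K+1, hi, by omega, le_rfl, ?_⟩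
          have hbj : b j ≤ a (K+1) := h1 j (K+1) (hi.trans hij) (by omega) hK
          rw [hsum, hmax]; linarith
  rcases key m le_rfl with h | ⟨i, j, hi, hij, hjm, hle⟩
  · linarith
  · have := h2 i j hi hij hjm
    linarith

/-- Fix `p_1, …, p_{m-1} ∈ [0,1]` (here `n = m - 1` fixed values), let
`q ≤ 1`, and let `p_m` be drawn from a density `f0` on `[0,1]` satisfying `f0(t) ≤ 1`
for all `t ∈ [0,q]`. Running the SL procedure at level `q`, the probability that
`p_(R_q) = p_m` is at most `q/m`. -/
theorem stmt3 (n : ℕ) (p : Fin n → ℝ) (hp : ∀ i, p i ∈ Set.Icc (0:ℝ) 1)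
    (q : ℝ) (hq0 : 0 < q) (hq1 : q ≤ 1)
    (f0 : ℝ → ℝ) (hf0m : Measurable f0) (hf0nn : ∀ t, 0 ≤ f0 t)
    (hf0int : ∫ t in Set.Icc (0:ℝ) 1, f0 t = 1)
    (hf0le : ∀ t ∈ Set.Icc 0 q, f0 t ≤ 1) :
    (uniform01.withDensity fun t => ENNReal.ofReal (f0 t))
        {u | slThreshold (n + 1) q (Fin.snoc p u) = u}
      ≤ ENNReal.ofReal (q / (n + 1)) := by
  classical
  set m : ℕ := n + 1 with hm
  have hmR : (0:ℝ) < (m : ℝ) := by positivity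
  have hpnn : ∀ i, 0 ≤ p i := fun i => (hp i).1
  set s : ℕ → ℝ := fun j => orderStat n p j with hs
  set a : ℕ → ℝ := fun k => s (k - 1) - q * k / m with ha
  have hIccne : (Finset.Icc 1 m).Nonempty := ⟨1, by simp [hm]⟩
  set b : ℕ → ℝ := fun k => (Finset.Icc 1 m).inf' hIccne
    (fun j => if j ≤ k then q / m + a j else a j) with hb
  -- basic facts about s, a, b
  have hs0 : s 0 = 0 := orderStat_zero n p
  have hsnn : ∀ j, 0 ≤ s j := fun j => orderStat_nonneg hpnn j
  have hb_le : ∀ k jj, jj ∈ Finset.Icc 1 m →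
      b k ≤ (if jj ≤ k then q / m + a jj else a jj) := fun k jj hjj =>
    Finset.inf'_le _ hjj
  have hb_h1 : ∀ j k, 1 ≤ j → j < k → k ≤ m → b j ≤ a k := by
    intro j k hj hjk hk
    have := hb_le j k (Finset.mem_Icc.mpr ⟨by omega, hk⟩)
    rwa [if_neg (by omega)] at this
  have hb_h2 : ∀ j k, 1 ≤ j → j ≤ k → k ≤ m → b k ≤ q / m + a j := by
    intro j k hj hjk hk
    have := hb_le k j (Finset.mem_Icc.mpr ⟨hj, hjk.trans hk⟩)
    rwa [if_pos hjk] at this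
  have hb_upper : ∀ k, 1 ≤ k → k ≤ m → q * k / m + b k ≤ q := by
    intro k hk1 hk2
    have h1 : b k ≤ q / m + a 1 := hb_h2 1 k le_rfl hk1 hk2
    have ha1 : a 1 = -(q / m) := by
      simp only [ha, hs0]
      push_cast
      ring
    have : q * k / m ≤ q := by
      rw [div_le_iff₀ hmR]
      have : (k : ℝ) ≤ (m : ℝ) := by exact_mod_cast hk2
      nlinarith
    linarith
  -- the cover
  set C : Set ℝ := ⋃ k ∈ Finset.Icc 1 m, Set.Icc (s (k-1)) (q * k / m + b k) with hC
  have hcover : {u : ℝ | slThreshold m q (Fin.snoc p u) = u}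
      ⊆ (Set.Icc (0:ℝ) 1)ᶜ ∪ ({0} ∪ C) := by
    intro u hu
    rcases em (u ∈ Set.Icc (0:ℝ) 1) with hu01 | hu01
    swap
    · exact Or.inl hu01
    right
    set x : Fin m → ℝ := Fin.snoc p u with hx
    set k : ℕ := slCount m q x with hk
    obtain ⟨hkm, hmin⟩ := slCount_spec m q x
    rw [← hk] at hkm hmin
    have hτ : orderStat m x k = u := hu
    rcases Nat.eq_zero_or_pos k with hk0 | hk1
    · left
      rw [hk0, orderStat_zero] at hτ
      exact hτ.symm
    -- now 1 ≤ k ≤ m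
    right
    have hxnn : ∀ i, 0 ≤ x i := by
      intro i
      refine Fin.lastCases ?_ ?_ i
      · simpa [hx] using hu01.1
      · intro j; simpa [hx] using hpnn j
    -- F1 : orderStat m x j ≤ s j for 1 ≤ j ≤ n
    have F1 : ∀ j, 1 ≤ j → j ≤ n → orderStat m x j ≤ s j := by
      intro j hj1 hjn
      refine (orderStat_le_iff x hj1 (by omega) _).mpr ?_
      have hcp : j ≤ Fintype.card {i // p i ≤ s j} :=
        (orderStat_le_iff p hj1 hjn _).mp le_rfl
      have := card_snoc_le p u (s j)
      rw [hx]; rw [this]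
      split <;> omega
    -- F2 : s (k-1) ≤ u
    have F2 : s (k - 1) ≤ u := by
      rcases Nat.eq_or_lt_of_le hk1 with hk1' | hk2
      · rw [← hk1']; simpa [hs0] using hu01.1
      · -- k ≥ 2
        have hcx : k ≤ Fintype.card {i // x i ≤ u} :=
          (orderStat_le_iff x hk1 hkm u).mp (le_of_eq hτ)
        have hsplit := card_snoc_le p u u
        rw [show (Fin.snoc p u : Fin (n+1) → ℝ) = x from rfl] at hsplit
        have hcp : k - 1 ≤ Fintype.card {i // p i ≤ u} := by
          rw [hsplit] at hcx; split at hcx <;> omega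
        exact (orderStat_le_iff p (by omega) (by omega) u).mpr hcp
    -- F3 : for k < j ≤ m, orderStat m x j ≤ s (j-1)
    have F3 : ∀ j, k < j → j ≤ m → orderStat m x j ≤ s (j - 1) := by
      intro j hkj hjm
      have hkn : k ≤ n := by omega
      have huk : u ≤ s k := by rw [← hτ]; exact F1 k hk1 hkn
      have hks : s k ≤ s (j - 1) := orderStat_mono hpnn (by omega) (by omega)
      have husj : u ≤ s (j - 1) := huk.trans hks
      refine (orderStat_le_iff x (by omega) hjm _).mpr ?_
      have hcp : j - 1 ≤ Fintype.card {i // p i ≤ s (j-1)} :=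
        (orderStat_le_iff p (by omega) (by omega) _).mp le_rfl
      have hsplit := card_snoc_le p u (s (j-1))
      rw [show (Fin.snoc p u : Fin (n+1) → ℝ) = x from rfl] at hsplit
      rw [hsplit, if_pos husj]; omega
    -- F4 : u - q k / m ≤ b k
    have F4 : u - q * k / m ≤ b k := by
      refine Finset.le_inf' hIccne _ ?_
      intro jj hjj
      obtain ⟨hjj1, hjjm⟩ := Finset.mem_Icc.mp hjj
      rcases le_or_gt jj k with hcase | hcase
      · rw [if_pos hcase]
        have hminj := hmin (jj - 1) (by omega)
        rw [← hτ]
        have hord : orderStat m x (jj - 1) ≤ s (jj - 1) := by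
          rcases Nat.eq_or_lt_of_le hjj1 with h1 | h2
          · rw [← h1]; simp [orderStat_zero, hs0]
          · exact F1 (jj - 1) (by omega) (by omega)
        have hcast : ((jj - 1 : ℕ) : ℝ) = (jj : ℝ) - 1 := by
          push_cast [hjj1]; ring
        rw [hcast] at hminj
        simp only [ha]
        have : q * ((jj:ℝ) - 1) / m = q * jj / m - q / m := by ring
        rw [this] at hminj
        linarith
      · rw [if_neg (by omega)]
        have hminj := hmin jj hjjm
        have hord := F3 jj hcase hjjm
        simp only [ha]
        rw [← hτ]
        linarith
    -- conclude membership in the cover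
    rw [hC]
    simp only [Set.mem_iUnion]
    refine ⟨k, Finset.mem_Icc.mpr ⟨hk1, hkm⟩, ?_⟩
    exact ⟨F2, by linarith [F4]⟩
  -- measure computations
  set μ : Measure ℝ := uniform01.withDensity fun t => ENNReal.ofReal (f0 t) with hμ
  have habs : μ ≪ uniform01 := withDensity_absolutelyContinuous _ _
  have hμcompl : μ (Set.Icc (0:ℝ) 1)ᶜ = 0 := by
    refine habs ?_
    rw [uniform01, Measure.restrict_apply (measurableSet_Icc.compl)]
    simp
  have hμ0 : μ ({0} : Set ℝ) = 0 := by
    refine habs ?_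
    refine le_antisymm ?_ zero_le
    calc uniform01 ({0} : Set ℝ) ≤ volume ({0} : Set ℝ) :=
          Measure.restrict_le_self _
      _ = 0 := Real.volume_singleton
  -- each interval of the cover
  have hint : ∀ k ∈ Finset.Icc 1 m,
      μ (Set.Icc (s (k-1)) (q * k / m + b k)) ≤ ENNReal.ofReal (max 0 (b k - a k)) := by
    intro k hkmem
    obtain ⟨hk1, hkm⟩ := Finset.mem_Icc.mp hkmem
    have hsub : Set.Icc (s (k-1)) (q * k / m + b k) ⊆ Set.Icc 0 q := by
      intro t ht
      exact ⟨(hsnn (k-1)).trans ht.1, ht.2.trans (hb_upper k hk1 hkm)⟩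
    calc μ (Set.Icc (s (k-1)) (q * k / m + b k))
        = ∫⁻ t in Set.Icc (s (k-1)) (q * k / m + b k), ENNReal.ofReal (f0 t) ∂uniform01 :=
          withDensity_apply _ measurableSet_Icc
      _ ≤ ∫⁻ _ in Set.Icc (s (k-1)) (q * k / m + b k), 1 ∂uniform01 := by
          refine setLIntegral_mono measurable_one ?_
          intro t ht
          exact ENNReal.ofReal_le_one.mpr (hf0le t (hsub ht))
      _ = uniform01 (Set.Icc (s (k-1)) (q * k / m + b k)) := setLIntegral_one _
      _ ≤ volume (Set.Icc (s (k-1)) (q * k / m + b k)) := Measure.restrict_le_self _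
      _ = ENNReal.ofReal (q * k / m + b k - s (k-1)) := Real.volume_Icc
      _ ≤ ENNReal.ofReal (max 0 (b k - a k)) := by
          refine ENNReal.ofReal_le_ofReal ?_
          have : q * k / m + b k - s (k-1) = b k - a k := by simp only [ha]; ring
          rw [this]
          exact le_max_right _ _
  -- put it together
  have hsum : ∑ k ∈ Finset.Icc 1 m, ENNReal.ofReal (max 0 (b k - a k))
      ≤ ENNReal.ofReal (q / m) := by
    rw [← ENNReal.ofReal_sum_of_nonneg (fun k _ => le_max_left 0 _)]
    refine ENNReal.ofReal_le_ofReal ?_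
    exact sum_interval_bound m a b (q / m) (by positivity) hb_h1 hb_h2
  calc μ {u : ℝ | slThreshold m q (Fin.snoc p u) = u}
      ≤ μ ((Set.Icc (0:ℝ) 1)ᶜ ∪ ({0} ∪ C)) := measure_mono hcover
    _ ≤ μ (Set.Icc (0:ℝ) 1)ᶜ + μ ({0} ∪ C) := measure_union_le _ _
    _ ≤ μ (Set.Icc (0:ℝ) 1)ᶜ + (μ ({0} : Set ℝ) + μ C) := by
        gcongr; exact measure_union_le _ _
    _ = μ C := by rw [hμcompl, hμ0]; simp
    _ ≤ ∑ k ∈ Finset.Icc 1 m, μ (Set.Icc (s (k-1)) (q * k / m + b k)) := by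
        rw [hC]; exact measure_biUnion_finset_le _ _
    _ ≤ ∑ k ∈ Finset.Icc 1 m, ENNReal.ofReal (max 0 (b k - a k)) :=
        Finset.sum_le_sum hint
    _ ≤ ENNReal.ofReal (q / m) := hsum
    _ = ENNReal.ofReal (q / (n + 1)) := by norm_num [hm]
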